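/- Let {M_k} be a POVM on a finite-dimensional Hilbert space H with success probability P = Σ_k Tr(M_k ρ_k) > 0 for an ensemble {ρ_k} of positive semidefinite operators with Σ Tr ρ_k = 1. Then there exist operators E_k with M_k = E_k† E_k and Σ_k Tr(E_k ρ_k) real, satisfying Σ_k Tr(E_k ρ_k) ≥ P. -/

import Mathlib

open Matrix ComplexOrder

/-- Square root of a PSD matrix (ported from older Mathlib). -/
noncomputable def Matrix.PosSemidef.sqrt {n : Type*} [Fintype n] [DecidableEq n]
    {A : Matrix n n ℂ} (hA : A.PosSemidef) : Matrix n n ℂ :=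
  (hA.1.eigenvectorUnitary : Matrix n n ℂ) * diagonal ((↑) ∘ Real.sqrt ∘ hA.1.eigenvalues) *
  (star hA.1.eigenvectorUnitary : Matrix n n ℂ)

lemma Matrix.PosSemidef.posSemidef_sqrt {n : Type*} [Fintype n] [DecidableEq n]
    {A : Matrix n n ℂ} (hA : A.PosSemidef) : PosSemidef hA.sqrt := by
  apply PosSemidef.mul_mul_conjTranspose_same
  refine posSemidef_diagonal_iff.mpr fun i ↦ ?_
  rw [Function.comp_apply, RCLike.nonneg_iff]
  constructor
  · simp [Real.sqrt_nonneg]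
  · simp

lemma Matrix.PosSemidef.sqrt_mul_self {n : Type*} [Fintype n] [DecidableEq n]
    {A : Matrix n n ℂ} (hA : A.PosSemidef) : hA.sqrt * hA.sqrt = A := by
  let C : Matrix n n ℂ := hA.1.eigenvectorUnitary
  let E := diagonal ((↑) ∘ Real.sqrt ∘ hA.1.eigenvalues : n → ℂ)
  suffices C * (E * (star C * C) * E) * star C = A by
    rw [Matrix.PosSemidef.sqrt]
    simpa only [← mul_assoc] using this
  have : E * E = diagonal ((↑) ∘ hA.1.eigenvalues) := by
    rw [diagonal_mul_diagonal]
    congr! with v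
    simp [← pow_two, ← Complex.ofReal_pow, Real.sq_sqrt (hA.eigenvalues_nonneg v)]
  have hCC : star C * C = 1 := Unitary.coe_star_mul_self _
  rw [hCC, Matrix.mul_one, this]
  conv_rhs => rw [hA.1.spectral_theorem, Unitary.conjStarAlgAut_apply]
  rfl

/-- Trace of a PSD matrix is nonnegative (complex order). -/
lemma aux_trace_psd_nonneg {n : Type*} [Fintype n] [DecidableEq n]
    {A : Matrix n n ℂ} (hA : A.PosSemidef) : 0 ≤ A.trace := by
  rw [Matrix.trace]
  refine Finset.sum_nonneg fun i _ => ?_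
  have := hA.dotProduct_mulVec_nonneg (Pi.single i 1)
  simpa [dotProduct, Pi.single_apply, Matrix.mulVec, mul_comm] using this

/-- Trace of a product of PSD matrices is nonnegative (complex order). -/
lemma aux_trace_mul_psd_nonneg {n : Type*} [Fintype n] [DecidableEq n]
    {A B : Matrix n n ℂ} (hA : A.PosSemidef) (hB : B.PosSemidef) :
    0 ≤ (A * B).trace := by
  obtain ⟨C, rfl⟩ := (⟨hB.sqrt, by rw [hB.posSemidef_sqrt.1, hB.sqrt_mul_self]⟩ : ∃ C, B = Cᴴ * C)
  rw [← Matrix.mul_assoc, Matrix.trace_mul_cycle]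
  exact aux_trace_psd_nonneg (hA.mul_mul_conjTranspose_same C)

/-- Eigenvalues of `M` are at most 1 when `1 - M` is PSD. -/
lemma aux_eigenvalues_le_one {n : Type*} [Fintype n] [DecidableEq n]
    {M : Matrix n n ℂ} (hM : M.PosSemidef)
    (h1 : ((1 : Matrix n n ℂ) - M).PosSemidef) (i : n) :
    hM.1.eigenvalues i ≤ 1 := by
  have hv := h1.re_dotProduct_nonneg ((hM.1.eigenvectorBasis i) : EuclideanSpace ℂ n)
  rw [Matrix.sub_mulVec, dotProduct_sub, map_sub, Matrix.one_mulVec] at hv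
  have h2 : (inner ℂ (hM.1.eigenvectorBasis i) (hM.1.eigenvectorBasis i) : ℂ) = 1 := by
    rw [inner_self_eq_norm_sq_to_K, hM.1.eigenvectorBasis.orthonormal.1 i]
    simp
  calc hM.1.eigenvalues i = _ := hM.1.eigenvalues_eq i
    _ ≤ RCLike.re (dotProduct (star ⇑(hM.1.eigenvectorBasis i))
        ⇑(hM.1.eigenvectorBasis i)) := sub_nonneg.mp hv
    _ = 1 := by rw [dotProduct_comm, ← EuclideanSpace.inner_eq_star_dotProduct, h2]; rfl

/-- `1 - sqrt M` is PSD when `1 - M` is PSD. -/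
lemma aux_one_sub_sqrt_psd {n : Type*} [Fintype n] [DecidableEq n]
    {M : Matrix n n ℂ} (hM : M.PosSemidef)
    (h1 : ((1 : Matrix n n ℂ) - M).PosSemidef) :
    ((1 : Matrix n n ℂ) - hM.sqrt).PosSemidef := by
  set V : Matrix n n ℂ := (hM.1.eigenvectorUnitary : Matrix n n ℂ)
  have hVmem : V ∈ Matrix.unitaryGroup n ℂ := hM.1.eigenvectorUnitary.2
  have hVV : V * star V = 1 := (Matrix.mem_unitaryGroup_iff.mp hVmem)
  have key : (1 : Matrix n n ℂ) - hM.sqrt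
      = V * Matrix.diagonal (fun i => (1 : ℂ) - Real.sqrt (hM.1.eigenvalues i)) * Vᴴ := by
    have hd : Matrix.diagonal (fun i => (1 : ℂ) - Real.sqrt (hM.1.eigenvalues i))
        = 1 - Matrix.diagonal ((↑) ∘ Real.sqrt ∘ hM.1.eigenvalues) := by
      rw [← Matrix.diagonal_one, Matrix.diagonal_sub]
      rfl
    rw [hd, Matrix.mul_sub, Matrix.mul_one, Matrix.sub_mul, ← Matrix.star_eq_conjTranspose, hVV,
      Matrix.PosSemidef.sqrt]
  rw [key]
  refine Matrix.PosSemidef.mul_mul_conjTranspose_same ?_ V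
  refine Matrix.posSemidef_diagonal_iff.mpr fun i => ?_
  rw [Complex.le_def]
  constructor
  · simp only [Complex.zero_re, Complex.sub_re, Complex.one_re, Complex.ofReal_re]
    have h1' : Real.sqrt (hM.1.eigenvalues i) ≤ 1 := by
      rw [show (1 : ℝ) = Real.sqrt 1 by simp]
      exact Real.sqrt_le_sqrt (aux_eigenvalues_le_one hM h1 i)
    linarith
  · simp

/-- `sqrt M - M` is PSD when `1 - M` is PSD. -/
lemma aux_sqrt_sub_psd {n : Type*} [Fintype n] [DecidableEq n]
    {M : Matrix n n ℂ} (hM : M.PosSemidef)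
    (h1 : ((1 : Matrix n n ℂ) - M).PosSemidef) :
    (hM.sqrt - M).PosSemidef := by
  set S := hM.sqrt with hS
  have hSpsd : S.PosSemidef := hM.posSemidef_sqrt
  set T := hSpsd.sqrt with hT
  have hTT : T * T = S := hSpsd.sqrt_mul_self
  have hTH : Tᴴ = T := hSpsd.posSemidef_sqrt.1
  have hcomm : T * S = S * T := by
    rw [← hTT, Matrix.mul_assoc]
  have key : S - M = T * ((1 : Matrix n n ℂ) - S) * Tᴴ := by
    rw [hTH, Matrix.mul_sub, Matrix.mul_one, Matrix.sub_mul, hTT]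
    have h2 : T * (S * T) = M := by
      rw [← Matrix.mul_assoc, hcomm, Matrix.mul_assoc, hTT, hS, hM.sqrt_mul_self]
    rw [Matrix.mul_assoc, h2]
  rw [key]
  exact (aux_one_sub_sqrt_psd hM h1).mul_mul_conjTranspose_same T

/-- Small-angle lemma for measurements: for any POVM `{M_k}` with positive success
probability `P = Σ Tr(M_k ρ_k)` on an ensemble of positive semidefinite operators
with `Σ Tr ρ_k = 1`, there is a generalized measurement decomposition
`M_k = E_kᴴ E_k` such that `Σ Tr(E_k ρ_k)` is real and at least `P`. -/
theorem exists_generalized_measurement_small_angle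
    {n K : Type*} [Fintype n] [DecidableEq n] [Fintype K]
    (ρ : K → Matrix n n ℂ) (hρ : ∀ k, (ρ k).PosSemidef)
    (hnorm : (∑ k, (ρ k).trace) = 1)
    (M : K → Matrix n n ℂ) (hM : ∀ k, (M k).PosSemidef)
    (hMsum : ((1 : Matrix n n ℂ) - ∑ k, M k).PosSemidef)
    (hpos : 0 < (∑ k, ((M k) * (ρ k)).trace).re) :
    ∃ E : K → Matrix n n ℂ,
      (∀ k, (E k)ᴴ * (E k) = M k) ∧
      (∑ k, ((E k) * (ρ k)).trace).im = 0 ∧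
      (∑ k, ((M k) * (ρ k)).trace).re ≤ (∑ k, ((E k) * (ρ k)).trace).re := by
  classical
  -- each `1 - M k` is PSD
  have hone : ∀ k, ((1 : Matrix n n ℂ) - M k).PosSemidef := by
    intro k
    have : (1 : Matrix n n ℂ) - M k = ((1 : Matrix n n ℂ) - ∑ j, M j)
        + ∑ j ∈ Finset.univ.erase k, M j := by
      rw [← Finset.add_sum_erase _ _ (Finset.mem_univ k)]
      abel
    rw [this]
    refine hMsum.add ?_
    induction (Finset.univ.erase k) using Finset.induction with
    | empty => simpa using Matrix.PosSemidef.zero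
    | insert _ _ h ih => rw [Finset.sum_insert h]; exact (hM _).add ih
  refine ⟨fun k => (hM k).sqrt, fun k => ?_, ?_, ?_⟩
  · rw [(hM k).posSemidef_sqrt.1, (hM k).sqrt_mul_self]
  · rw [Complex.im_sum]
    refine Finset.sum_eq_zero fun k _ => ?_
    have := aux_trace_mul_psd_nonneg (hM k).posSemidef_sqrt (hρ k)
    rw [Complex.le_def] at this
    exact this.2.symm
  · rw [Complex.re_sum, Complex.re_sum]
    refine Finset.sum_le_sum fun k _ => ?_
    have h := aux_trace_mul_psd_nonneg (aux_sqrt_sub_psd (hM k) (hone k)) (hρ k)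
    rw [Matrix.sub_mul, Matrix.trace_sub, Complex.le_def] at h
    simp only [Complex.zero_re, Complex.sub_re] at h
    linarith [h.1]
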